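/- Let G be a positive C^2 function on [x0, ∞) that is square-integrable and satisfies -h^2 G'' + (V - E)G = 0, where V(x) - E ≥ δη/2 > 0 for all x ≥ x0. Then for all z ≥ x ≥ x0, G(z) ≤ exp(-(√(δη)/(2h))(z - x)) · G(x). -/

import Mathlib

open Set MeasureTheory

theorem stmt0 (h δ η x0 E : ℝ) (hh : 0 < h) (hδ : 0 < δ) (hη : 0 < η)
    (V G G' G'' : ℝ → ℝ)
    (hVlb : ∀ x ∈ Ici x0, δ * η / 2 ≤ V x - E)
    (hG1 : ∀ x ∈ Ici x0, HasDerivWithinAt G (G' x) (Ici x0) x)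
    (hG2 : ∀ x ∈ Ici x0, HasDerivWithinAt G' (G'' x) (Ici x0) x)
    (hG''c : ContinuousOn G'' (Ici x0))
    (hGpos : ∀ x ∈ Ici x0, 0 < G x)
    (hGint : IntegrableOn (fun x => (G x) ^ 2) (Ici x0))
    (hODE : ∀ x ∈ Ici x0, -h ^ 2 * G'' x + (V x - E) * G x = 0) :
    ∀ x z, x0 ≤ x → x ≤ z →
      G z ≤ Real.exp (-(Real.sqrt (δ * η) / (2 * h)) * (z - x)) * G x := by
  set κ : ℝ := Real.sqrt (δ * η) / (2 * h) with hκdef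
  have hδη : 0 < δ * η := mul_pos hδ hη
  have hsq : Real.sqrt (δ * η) ^ 2 = δ * η := Real.sq_sqrt hδη.le
  have hsqpos : 0 < Real.sqrt (δ * η) := Real.sqrt_pos.mpr hδη
  have hκ : 0 < κ := div_pos hsqpos (by linarith)
  have hκ2 : κ ^ 2 = δ * η / (4 * h ^ 2) := by
    rw [hκdef, div_pow, hsq]; ring
  -- G'' ≥ κ² G
  have hG''ge : ∀ x ∈ Ici x0, κ ^ 2 * G x ≤ G'' x := by
    intro x hx
    have hode := hODE x hx
    have hV := hVlb x hx
    have hGp := (hGpos x hx).le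
    have hh2 : 0 < h ^ 2 := by positivity
    rw [hκ2]
    have h1 : h ^ 2 * G'' x = (V x - E) * G x := by linarith
    have h2 : δ * η / 2 * G x ≤ (V x - E) * G x :=
      mul_le_mul_of_nonneg_right hV hGp
    rw [div_mul_eq_mul_div, div_le_iff₀ (by positivity)]
    nlinarith [mul_nonneg hδη.le hGp]
  have hG''nn : ∀ x ∈ Ici x0, 0 ≤ G'' x := fun x hx =>
    le_trans (mul_nonneg (sq_nonneg κ) (hGpos x hx).le) (hG''ge x hx)
  have hGcont : ContinuousOn G (Ici x0) := fun x hx => (hG1 x hx).continuousWithinAt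
  have hG'cont : ContinuousOn G' (Ici x0) := fun x hx => (hG2 x hx).continuousWithinAt
  -- G' monotone
  have hG'mono : MonotoneOn G' (Ici x0) :=
    monotoneOn_of_hasDerivWithinAt_nonneg (convex_Ici x0) hG'cont
      (fun x hx => (hG2 x (interior_subset hx)).mono interior_subset)
      (fun x hx => hG''nn x (interior_subset hx))
  -- G' ≤ 0 on Ici x0
  have hG'le : ∀ x ∈ Ici x0, G' x ≤ 0 := by
    intro x1 hx1
    by_contra hpos
    push_neg at hpos
    have hsub : Ici x1 ⊆ Ici x0 := Ici_subset_Ici.mpr hx1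
    -- G is monotone on Ici x1
    have hGmono : MonotoneOn G (Ici x1) := by
      refine monotoneOn_of_hasDerivWithinAt_nonneg (convex_Ici x1)
        (hGcont.mono hsub)
        (fun x hx => ((hG1 x (hsub (interior_subset hx))).mono hsub).mono interior_subset)
        (fun x hx => ?_)
      have hxI : x ∈ Ici x1 := interior_subset hx
      exact le_trans hpos.le (hG'mono hx1 (hsub hxI) hxI)
    have hc : 0 < G x1 := hGpos x1 hx1
    have hle : ∀ x ∈ Ici x1, (G x1) ^ 2 ≤ (G x) ^ 2 := by
      intro x hx
      have := hGmono (self_mem_Ici) hx hx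
      nlinarith [hGpos x (hsub hx)]
    have hint : IntegrableOn (fun x => (G x) ^ 2) (Ici x1) := hGint.mono_set hsub
    have hconst : Integrable (fun _ : ℝ => (G x1) ^ 2) (volume.restrict (Ici x1)) := by
      refine hint.mono' aestronglyMeasurable_const ?_
      filter_upwards [ae_restrict_mem measurableSet_Ici] with x hx
      rw [Real.norm_eq_abs, abs_of_pos (by positivity)]
      exact hle x hx
    rw [integrable_const_iff] at hconst
    rcases hconst with h1 | h2
    · exact absurd h1 (by positivity)
    · rw [isFiniteMeasure_restrict, Real.volume_Ici] at h2
      exact absurd h2 (by simp)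
  -- G antitone
  have hGanti : AntitoneOn G (Ici x0) :=
    antitoneOn_of_hasDerivWithinAt_nonpos (convex_Ici x0) hGcont
      (fun x hx => (hG1 x (interior_subset hx)).mono interior_subset)
      (fun x hx => hG'le x (interior_subset hx))
  -- H x = exp(-κ x) * (G' x + κ G x) is monotone
  have hHderiv : ∀ x ∈ Ici x0, HasDerivWithinAt
      (fun x => Real.exp (-κ * x) * (G' x + κ * G x))
      (Real.exp (-κ * x) * (G'' x - κ ^ 2 * G x)) (Ici x0) x := by
    intro x hx
    have he : HasDerivAt (fun x => Real.exp (-κ * x))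
        (Real.exp (-κ * x) * (-κ)) x := by
      simpa using (((hasDerivAt_id x).const_mul (-κ)).exp)
    have hF : HasDerivWithinAt (fun x => G' x + κ * G x)
        (G'' x + κ * G' x) (Ici x0) x :=
      (hG2 x hx).add ((hG1 x hx).const_mul κ)
    have := he.hasDerivWithinAt.mul hF
    exact this.congr_deriv (by ring)
  have hHmono : MonotoneOn (fun x => Real.exp (-κ * x) * (G' x + κ * G x)) (Ici x0) := by
    refine monotoneOn_of_hasDerivWithinAt_nonneg (convex_Ici x0)
      (fun x hx => (hHderiv x hx).continuousWithinAt)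
      (fun x hx => (hHderiv x (interior_subset hx)).mono interior_subset)
      (fun x hx => ?_)
    have hxI : x ∈ Ici x0 := interior_subset hx
    have := hG''ge x hxI
    have := Real.exp_pos (-κ * x)
    nlinarith
  -- F := G' + κ G ≤ 0 on Ici x0
  have hFle : ∀ x ∈ Ici x0, G' x + κ * G x ≤ 0 := by
    intro x1 hx1
    by_contra hpos
    push_neg at hpos
    set c : ℝ := Real.exp (-κ * x1) * (G' x1 + κ * G x1) with hcdef
    have hcpos : 0 < c := mul_pos (Real.exp_pos _) hpos
    -- for x ≥ x1 : c ≤ exp(-κ x) (G' x + κ G x) ≤ exp(-κ x) κ G x1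
    have key : ∀ x, x1 ≤ x → c * Real.exp (κ * x) ≤ κ * G x1 := by
      intro x hx
      have hxI : x ∈ Ici x0 := le_trans hx1 hx
      have h1 : c ≤ Real.exp (-κ * x) * (G' x + κ * G x) :=
        hHmono hx1 hxI hx
      have h2 : G' x + κ * G x ≤ κ * G x1 := by
        have := hG'le x hxI
        have := hGanti hx1 hxI hx
        nlinarith
      have h3 : Real.exp (-κ * x) * (G' x + κ * G x) ≤ Real.exp (-κ * x) * (κ * G x1) :=
        mul_le_mul_of_nonneg_left h2 (Real.exp_pos _).le
      have h4 : c * Real.exp (κ * x) ≤ Real.exp (-κ * x) * (κ * G x1) * Real.exp (κ * x) :=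
        mul_le_mul_of_nonneg_right (le_trans h1 h3) (Real.exp_pos _).le
      calc c * Real.exp (κ * x) ≤ Real.exp (-κ * x) * (κ * G x1) * Real.exp (κ * x) := h4
        _ = κ * G x1 * (Real.exp (-κ * x) * Real.exp (κ * x)) := by ring
        _ = κ * G x1 := by rw [← Real.exp_add]; simp
    -- contradiction: pick x large
    set x : ℝ := max x1 ((κ * G x1 / c + 1) / κ) with hxdef
    have hx1x : x1 ≤ x := le_max_left _ _
    have hxge : (κ * G x1 / c + 1) / κ ≤ x := le_max_right _ _
    have hκx : κ * G x1 / c + 1 ≤ κ * x := by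
      rw [div_le_iff₀ hκ] at hxge; linarith
    have hexp : κ * x + 1 ≤ Real.exp (κ * x) := Real.add_one_le_exp _
    have := key x hx1x
    have h5 : κ * G x1 / c + 1 ≤ Real.exp (κ * x) := by linarith
    have h6 : c * (κ * G x1 / c + 1) ≤ c * Real.exp (κ * x) :=
      mul_le_mul_of_nonneg_left h5 hcpos.le
    rw [mul_add, mul_div_cancel₀ _ hcpos.ne'] at h6
    linarith
  -- W x = exp(κ x) * G x is antitone
  have hWderiv : ∀ x ∈ Ici x0, HasDerivWithinAt
      (fun x => Real.exp (κ * x) * G x)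
      (Real.exp (κ * x) * (G' x + κ * G x)) (Ici x0) x := by
    intro x hx
    have he : HasDerivAt (fun x => Real.exp (κ * x))
        (Real.exp (κ * x) * κ) x := by
      simpa using (((hasDerivAt_id x).const_mul κ).exp)
    have := he.hasDerivWithinAt.mul (hG1 x hx)
    exact this.congr_deriv (by ring)
  have hWanti : AntitoneOn (fun x => Real.exp (κ * x) * G x) (Ici x0) := by
    refine antitoneOn_of_hasDerivWithinAt_nonpos (convex_Ici x0)
      (fun x hx => (hWderiv x hx).continuousWithinAt)
      (fun x hx => (hWderiv x (interior_subset hx)).mono interior_subset)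
      (fun x hx => ?_)
    have hxI : x ∈ Ici x0 := interior_subset hx
    have := hFle x hxI
    have := Real.exp_pos (κ * x)
    nlinarith
  -- conclude
  intro x z hx hxz
  have hxI : x ∈ Ici x0 := hx
  have hzI : z ∈ Ici x0 := le_trans hx hxz
  have hW := hWanti hxI hzI hxz
  have hez : 0 < Real.exp (κ * z) := Real.exp_pos _
  have hstep : G z ≤ Real.exp (κ * x) * G x / Real.exp (κ * z) := by
    rw [le_div_iff₀ hez]
    simp only at hW
    nlinarith [hW]
  calc G z ≤ Real.exp (κ * x) * G x / Real.exp (κ * z) := hstep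
    _ = Real.exp (κ * x - κ * z) * G x := by
        rw [Real.exp_sub]; ring
    _ = Real.exp (-κ * (z - x)) * G x := by ring_nf
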